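/- Ω(√(KT)) regret lower bound for stochastic bandits: There exist absolute constants c > 0 and γ > 0 with the following property. For every number of arms K ≥ 2 and time horizon T such that ε := √(cK/T) ≤ 1/2, and every randomized bandit algorithm (a probability distribution over deterministic bandit algorithms), if an arm a is drawn uniformly at random from [K] and the algorithm is run on problem instance I_a(ε), then the expected regret satisfies E[R(T)] ≥ γ·√(KT), where R(T) = (ε/2)·|{t ∈ [T] : a_t ≠ a}| is the regret under instance I_a(ε), a_t is the arm chosen in round t, and the expectation is over the choice of a, the rewards, and the algorithm's randomization. -/

import Mathlib

/-- The probability that a deterministic bandit algorithm `A` (with 0/1 rewards and `K` arms),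
run on the mean-reward vector `μ`, observes the reward sequence `r : Fin T → Bool`:
conditionally on the first `t-1` rewards, the reward in round `t` equals `1` with
probability `μ a_t`, where `a_t = A t (prefix of r)`. -/
noncomputable def seqProb {K T : ℕ} (A : (t : Fin T) → (Fin t.1 → Bool) → Fin K)
    (μ : Fin K → ℝ) (r : Fin T → Bool) : ℝ :=
  ∏ t : Fin T,
    if r t then μ (A t fun s => r ⟨s.1, s.2.trans t.2⟩)
    else 1 - μ (A t fun s => r ⟨s.1, s.2.trans t.2⟩)

/-- Problem instance `I_j(ε)`: arm `j` has mean reward `(1+ε)/2`, all other arms `1/2`. -/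
noncomputable def instMu (K : ℕ) (j : Fin K) (ε : ℝ) : Fin K → ℝ :=
  fun i => if i = j then (1 + ε) / 2 else 1 / 2

/-- A deterministic bandit algorithm: the arm chosen in round `t` is a function of the
previously observed rewards. -/
abbrev DetAlg (K T : ℕ) := (t : Fin T) → (Fin t.1 → Bool) → Fin K

/-- The number of rounds in which the algorithm `A`, upon observing reward sequence `r`,
chooses an arm different from `a`. -/
def regretCount {K T : ℕ} (A : DetAlg K T) (r : Fin T → Bool) (a : Fin K) : ℕ :=
  (Finset.univ.filter (fun t : Fin T => A t (fun s => r ⟨s.1, s.2.trans t.2⟩) ≠ a)).card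

lemma seqProb_snoc {K T : ℕ} (A : DetAlg K (T+1)) (μ : Fin K → ℝ) (r : Fin T → Bool) (b : Bool) :
    seqProb A μ (Fin.snoc r b) =
      seqProb (fun t pre => A t.castSucc pre) μ r *
        (if b then μ (A (Fin.last T) r) else 1 - μ (A (Fin.last T) r)) := by
  unfold seqProb
  rw [Fin.prod_univ_castSucc]
  congr 1
  · apply Finset.prod_congr rfl
    intro t _
    have h1 : Fin.snoc (α := fun _ => Bool) r b t.castSucc = r t := by simp
    have h2 : (fun s : Fin (t.castSucc.1) => Fin.snoc (α := fun _ => Bool) r b ⟨s.1, s.2.trans t.castSucc.2⟩)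
        = (fun s : Fin t.1 => r ⟨s.1, s.2.trans t.2⟩) := by
      funext s
      have he : (⟨s.1, s.2.trans t.castSucc.2⟩ : Fin (T+1)) = Fin.castSucc ⟨s.1, s.2.trans t.2⟩ := rfl
      rw [he, Fin.snoc_castSucc]
    rw [h1, h2]
  · have hb : Fin.snoc (α := fun _ => Bool) r b (Fin.last T) = b := by simp
    have h2 : (fun s : Fin (Fin.last T).1 => Fin.snoc (α := fun _ => Bool) r b ⟨s.1, s.2.trans (Fin.last T).2⟩) = r := by
      funext s
      have he : (⟨s.1, s.2.trans (Fin.last T).2⟩ : Fin (T+1)) = Fin.castSucc s := rfl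
      rw [he, Fin.snoc_castSucc]
    rw [hb, h2]

lemma sum_seqProb {K : ℕ} : ∀ {T : ℕ} (A : DetAlg K T) (μ : Fin K → ℝ),
    ∑ r : Fin T → Bool, seqProb A μ r = 1 := by
  intro T
  induction T with
  | zero =>
    intro A μ
    simp [seqProb]
  | succ T ih =>
    intro A μ
    have hbij : Function.Bijective (fun p : (Fin T → Bool) × Bool => (Fin.snoc p.1 p.2 : Fin (T+1) → Bool)) := by
      constructor
      · intro p q h
        have h1 : p.1 = q.1 := by
          funext i
          have := congrFun h i.castSucc
          simpa using this
        have h2 : p.2 = q.2 := by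
          have := congrFun h (Fin.last T)
          simpa using this
        exact Prod.ext h1 h2
      · intro r
        exact ⟨(Fin.init r, r (Fin.last T)), Fin.snoc_init_self r⟩
    rw [← Fintype.sum_bijective _ hbij _ (fun r => seqProb A μ r) (fun p => rfl)]
    rw [Fintype.sum_prod_type]
    have key : ∀ x : Fin T → Bool,
        ∑ b : Bool, seqProb A μ (Fin.snoc x b) =
        seqProb (fun t pre => A t.castSucc pre) μ x := by
      intro x
      rw [Fintype.sum_bool, seqProb_snoc, seqProb_snoc]
      simp
      ring
    rw [Finset.sum_congr rfl (fun x _ => key x), ih]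

/-- Averaging over the bit at position `t`: the prefix is unchanged when flipping bit `t`. -/
lemma flip_sum {T : ℕ} (t : Fin T) (h : (Fin t.1 → Bool) → Bool → ℝ) :
    ∑ r : Fin T → Bool, h (fun s => r ⟨s.1, s.2.trans t.2⟩) (r t)
      = ∑ r : Fin T → Bool, (h (fun s => r ⟨s.1, s.2.trans t.2⟩) true
          + h (fun s => r ⟨s.1, s.2.trans t.2⟩) false) / 2 := by
  have hpre : ∀ r : Fin T → Bool,
      (fun s : Fin t.1 => Function.update r t (!r t) ⟨s.1, s.2.trans t.2⟩)
        = (fun s : Fin t.1 => r ⟨s.1, s.2.trans t.2⟩) := by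
    intro r
    funext s
    apply Function.update_of_ne
    intro hc
    have : s.1 = t.1 := congrArg Fin.val hc
    exact absurd this (Nat.ne_of_lt s.2)
  have hinv : Function.Involutive (fun r : Fin T → Bool => Function.update r t (!r t)) := by
    intro r
    funext i
    by_cases hi : i = t
    · subst hi; simp
    · simp [Function.update_of_ne hi]
  have key : ∑ r : Fin T → Bool, h (fun s => r ⟨s.1, s.2.trans t.2⟩) (!r t)
      = ∑ r : Fin T → Bool, h (fun s => r ⟨s.1, s.2.trans t.2⟩) (r t) := by
    refine Fintype.sum_bijective _ hinv.bijective _ _ ?_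
    intro r
    simp only [hpre r, Function.update_self]
  have : (2:ℝ) * ∑ r : Fin T → Bool, h (fun s => r ⟨s.1, s.2.trans t.2⟩) (r t)
      = ∑ r : Fin T → Bool, (h (fun s => r ⟨s.1, s.2.trans t.2⟩) true
          + h (fun s => r ⟨s.1, s.2.trans t.2⟩) false) := by
    rw [two_mul]
    nth_rewrite 2 [← key]
    rw [← Finset.sum_add_distrib]
    apply Finset.sum_congr rfl
    intro r _
    cases hr : r t <;> simp [hr] <;> ring
  rw [← Finset.sum_div, ← this]
  ring

lemma regretCount_le {K T : ℕ} (A : DetAlg K T) (r : Fin T → Bool) (a : Fin K) :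
    regretCount A r a ≤ T := by
  classical
  calc (Finset.univ.filter _).card ≤ (Finset.univ : Finset (Fin T)).card := Finset.card_filter_le _ _
  _ = T := by simp

/-- number of pulls of arm a (as a real): `T - regretCount`. -/
lemma count_eq {K T : ℕ} (A : DetAlg K T) (r : Fin T → Bool) (a : Fin K) :
    (T : ℝ) - regretCount A r a
      = ∑ t : Fin T, (if A t (fun s => r ⟨s.1, s.2.trans t.2⟩) = a then (1:ℝ) else 0) := by
  classical
  have h := Finset.card_filter_add_card_filter_not
    (s := (Finset.univ : Finset (Fin T)))
    (p := fun t : Fin T => A t (fun s => r ⟨s.1, s.2.trans t.2⟩) = a)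
  simp only [Finset.card_univ, Fintype.card_fin] at h
  have h2 : ((Finset.univ.filter (fun t : Fin T => A t (fun s => r ⟨s.1, s.2.trans t.2⟩) = a)).card : ℝ)
      = ∑ t : Fin T, (if A t (fun s => r ⟨s.1, s.2.trans t.2⟩) = a then (1:ℝ) else 0) := by
    rw [Finset.card_filter]
    push_cast
    apply Finset.sum_congr rfl
    intro t _
    split <;> simp
  rw [← h2]
  have : regretCount A r a
      = (Finset.univ.filter (fun t : Fin T => ¬ (A t (fun s => r ⟨s.1, s.2.trans t.2⟩) = a))).card := rfl
  rw [this]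
  have := h
  push_cast [← this]
  linarith [h]

noncomputable def nQ {K T : ℕ} (A : DetAlg K T) (a : Fin K) : ℝ :=
  ∑ r : Fin T → Bool, ((2:ℝ)^T)⁻¹ * ((T:ℝ) - regretCount A r a)

lemma card_rewards (T : ℕ) : (Fintype.card (Fin T → Bool) : ℝ) = 2^T := by
  simp [Fintype.card_fun]

lemma sum_Q (T : ℕ) : ∑ _r : Fin T → Bool, ((2:ℝ)^T)⁻¹ = 1 := by
  rw [Finset.sum_const, nsmul_eq_mul, Finset.card_univ]
  rw [show ((Fintype.card (Fin T → Bool)) : ℝ) = 2^T from card_rewards T]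
  field_simp

lemma nQ_nonneg {K T : ℕ} (A : DetAlg K T) (a : Fin K) : 0 ≤ nQ A a := by
  apply Finset.sum_nonneg
  intro r _
  have h1 : (regretCount A r a : ℝ) ≤ T := by exact_mod_cast regretCount_le A r a
  have h2 : (0:ℝ) ≤ ((2:ℝ)^T)⁻¹ := by positivity
  nlinarith

lemma sum_nQ {K T : ℕ} (A : DetAlg K T) : ∑ a : Fin K, nQ A a = T := by
  unfold nQ
  rw [Finset.sum_comm]
  have key : ∀ r : Fin T → Bool,
      ∑ a : Fin K, ((2:ℝ)^T)⁻¹ * ((T:ℝ) - regretCount A r a) = ((2:ℝ)^T)⁻¹ * T := by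
    intro r
    rw [← Finset.mul_sum]
    congr 1
    have : ∀ a : Fin K, (T:ℝ) - regretCount A r a
        = ∑ t : Fin T, (if A t (fun s => r ⟨s.1, s.2.trans t.2⟩) = a then (1:ℝ) else 0) :=
      fun a => count_eq A r a
    rw [Finset.sum_congr rfl (fun a _ => this a), Finset.sum_comm]
    have : ∀ t : Fin T,
        ∑ a : Fin K, (if A t (fun s => r ⟨s.1, s.2.trans t.2⟩) = a then (1:ℝ) else 0) = 1 := by
      intro t
      rw [Finset.sum_ite_eq]
      simp
    rw [Finset.sum_congr rfl (fun t _ => this t)]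
    simp
  rw [Finset.sum_congr rfl (fun r _ => key r), ← Finset.sum_mul, sum_Q]
  simp

set_option maxHeartbeats 1000000 in
lemma per_arm {K T : ℕ} (A : DetAlg K T) (a : Fin K) (ε : ℝ) (hε0 : 0 < ε) (hε : ε ≤ 1/2) :
    ∑ r : Fin T → Bool, seqProb A (instMu K a ε) r * ((T:ℝ) - regretCount A r a)
      ≤ nQ A a + 2 * T * ε * Real.sqrt (nQ A a) := by
  classical
  set μ : Fin K → ℝ := instMu K a ε with hμdef
  set Q : ℝ := ((2:ℝ)^T)⁻¹ with hQdef
  have hQ0 : 0 < Q := by positivity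
  set P : (Fin T → Bool) → ℝ := fun r => seqProb A μ r with hPdef
  set N : (Fin T → Bool) → ℝ := fun r => (T:ℝ) - regretCount A r a with hNdef
  have hμpos : ∀ i, 0 < μ i := by
    intro i
    rw [hμdef]
    unfold instMu
    split <;> nlinarith
  have hμlt : ∀ i, μ i < 1 := by
    intro i
    rw [hμdef]
    unfold instMu
    split <;> nlinarith
  set p : Fin T → (Fin T → Bool) → ℝ := fun t r =>
    if r t then μ (A t fun s => r ⟨s.1, s.2.trans t.2⟩)
    else 1 - μ (A t fun s => r ⟨s.1, s.2.trans t.2⟩) with hpdef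
  have hp_pos : ∀ t r, 0 < p t r := by
    intro t r
    rw [hpdef]
    dsimp only
    split
    · exact hμpos _
    · have := hμlt (A t fun s => r ⟨s.1, s.2.trans t.2⟩); linarith
  have hP_eq : ∀ r, P r = ∏ t : Fin T, p t r := fun r => rfl
  have hP_pos : ∀ r, 0 < P r := by
    intro r
    rw [hP_eq]
    exact Finset.prod_pos (fun t _ => hp_pos t r)
  have hsumP : ∑ r : Fin T → Bool, P r = 1 := sum_seqProb A μ
  have hsumQ : ∑ _r : Fin T → Bool, Q = 1 := sum_Q T
  have hN0 : ∀ r, 0 ≤ N r := by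
    intro r
    have h1 : (regretCount A r a : ℝ) ≤ T := by exact_mod_cast regretCount_le A r a
    rw [hNdef]
    dsimp only
    linarith
  have hNT : ∀ r, N r ≤ T := by
    intro r
    have h1 : (0:ℝ) ≤ (regretCount A r a : ℝ) := Nat.cast_nonneg _
    rw [hNdef]
    dsimp only
    linarith
  have hnQ' : nQ A a = Q * ∑ r : Fin T → Bool, N r := by
    unfold nQ
    rw [Finset.mul_sum]
  have hPQ : ∀ r, P r = Q * ∏ t : Fin T, (2 * p t r) := by
    intro r
    rw [Finset.prod_mul_distrib, Finset.prod_const, hP_eq, hQdef]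
    simp
  have hsqrtPQ : ∀ r, Real.sqrt (P r * Q)
      = Q * Real.exp ((∑ t : Fin T, Real.log (2 * p t r)) / 2) := by
    intro r
    have hprodpos : 0 < ∏ t : Fin T, (2 * p t r) :=
      Finset.prod_pos (fun t _ => by have := hp_pos t r; linarith)
    have h1 : P r * Q = Q^2 * ∏ t : Fin T, (2 * p t r) := by
      rw [hPQ r]; ring
    rw [h1, Real.sqrt_mul (by positivity), Real.sqrt_sq hQ0.le]
    congr 1
    rw [Real.sqrt_eq_rpow, Real.rpow_def_of_pos hprodpos, Real.log_prod
      (fun t _ => by have := hp_pos t r; positivity)]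
    rw [mul_one_div]
  -- the key exchange computation
  have swap : ∑ r : Fin T → Bool, ∑ t : Fin T, Real.log (2 * p t r)
      = Real.log (1 - ε^2) / 2 * (∑ r : Fin T → Bool, N r) := by
    rw [Finset.sum_comm]
    have per_t : ∀ t : Fin T, ∑ r : Fin T → Bool, Real.log (2 * p t r)
        = ∑ r : Fin T → Bool, Real.log (1 - ε^2) / 2 *
            (if A t (fun s => r ⟨s.1, s.2.trans t.2⟩) = a then (1:ℝ) else 0) := by
      intro t
      simp only [hpdef]
      have happ := flip_sum t (fun pre b =>
        Real.log (2 * (if b then μ (A t pre) else 1 - μ (A t pre))))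
      rw [happ]
      apply Finset.sum_congr rfl
      intro r _
      by_cases hAt : A t (fun s => r ⟨s.1, s.2.trans t.2⟩) = a
      · have hμa : μ (A t fun s => r ⟨s.1, s.2.trans t.2⟩) = (1 + ε)/2 := by
          rw [hμdef]; unfold instMu; rw [if_pos hAt]
        rw [hμa, if_pos hAt]
        have e1 : 2 * ((1+ε)/2) = 1 + ε := by ring
        have e2 : 2 * (1 - (1+ε)/2) = 1 - ε := by ring
        rw [if_pos rfl, if_neg (Bool.false_ne_true), e1, e2]
        rw [← Real.log_mul (by nlinarith) (by nlinarith)]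
        have : (1 + ε) * (1 - ε) = 1 - ε^2 := by ring
        rw [this]
        ring
      · have hμa : μ (A t fun s => r ⟨s.1, s.2.trans t.2⟩) = 1/2 := by
          rw [hμdef]; unfold instMu; rw [if_neg hAt]
        rw [hμa, if_neg hAt]
        rw [if_pos rfl, if_neg (Bool.false_ne_true)]
        norm_num
    rw [Finset.sum_congr rfl (fun t _ => per_t t), Finset.sum_comm]
    rw [Finset.mul_sum]
    apply Finset.sum_congr rfl
    intro r _
    rw [← Finset.mul_sum, ← count_eq A r a]
  -- Hellinger affinity lower bound
  have hH_lb : 1 + Real.log (1 - ε^2) / 4 * nQ A a ≤ ∑ r : Fin T → Bool, Real.sqrt (P r * Q) := by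
    have step1 : ∀ r, Q * (1 + (∑ t : Fin T, Real.log (2 * p t r)) / 2) ≤ Real.sqrt (P r * Q) := by
      intro r
      rw [hsqrtPQ r]
      have := Real.add_one_le_exp ((∑ t : Fin T, Real.log (2 * p t r)) / 2)
      nlinarith
    have lhs_eq : ∑ r : Fin T → Bool, Q * (1 + (∑ t : Fin T, Real.log (2 * p t r)) / 2)
        = 1 + Real.log (1 - ε^2) / 4 * nQ A a := by
      have expand : ∀ r : Fin T → Bool, Q * (1 + (∑ t : Fin T, Real.log (2 * p t r)) / 2)
          = Q + Q / 2 * (∑ t : Fin T, Real.log (2 * p t r)) := by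
        intro r; ring
      rw [Finset.sum_congr rfl (fun r _ => expand r), Finset.sum_add_distrib, hsumQ,
        ← Finset.mul_sum, swap, hnQ']
      ring
    rw [← lhs_eq]
    exact Finset.sum_le_sum (fun r _ => step1 r)
  set H : ℝ := ∑ r : Fin T → Bool, Real.sqrt (P r * Q) with hHdef
  have hH2 : 2 - 2 * H ≤ ε^2 * nQ A a := by
    have h1 : (0:ℝ) < 1 - ε^2 := by nlinarith
    have hlog : -(2*ε^2) ≤ Real.log (1 - ε^2) := by
      have h2 := Real.one_sub_inv_le_log_of_pos h1
      have h3 : (1 - ε^2)⁻¹ ≤ 1 + 2*ε^2 := by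
        rw [inv_le_iff_one_le_mul₀ h1]
        have hx : ε^2 ≤ 1/4 := by nlinarith
        nlinarith [sq_nonneg ε]
      linarith
    have h4 := mul_le_mul_of_nonneg_right hlog (nQ_nonneg A a)
    linarith
  have hA2 : ∑ r : Fin T → Bool, (Real.sqrt (P r) - Real.sqrt Q)^2 = 2 - 2 * H := by
    have expand : ∀ r : Fin T → Bool, (Real.sqrt (P r) - Real.sqrt Q)^2
        = P r + Q - 2 * Real.sqrt (P r * Q) := by
      intro r
      rw [sub_sq, Real.sq_sqrt (hP_pos r).le, Real.sq_sqrt hQ0.le,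
        Real.sqrt_mul (hP_pos r).le]
      ring
    rw [Finset.sum_congr rfl (fun r _ => expand r)]
    rw [Finset.sum_sub_distrib, Finset.sum_add_distrib, hsumP, hsumQ, ← Finset.mul_sum, ← hHdef]
    ring
  -- Cauchy-Schwarz
  have key : ∑ r : Fin T → Bool, (P r - Q) * N r
      ≤ Real.sqrt (ε^2 * nQ A a) * Real.sqrt (4 * (T:ℝ)^2) := by
    have hfactor : ∀ r : Fin T → Bool, (P r - Q) * N r
        = (Real.sqrt (P r) - Real.sqrt Q) * ((Real.sqrt (P r) + Real.sqrt Q) * N r) := by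
      intro r
      have e1 : Real.sqrt (P r) ^ 2 = P r := Real.sq_sqrt (hP_pos r).le
      have e2 : Real.sqrt Q ^ 2 = Q := Real.sq_sqrt hQ0.le
      calc (P r - Q) * N r = (Real.sqrt (P r)^2 - Real.sqrt Q^2) * N r := by rw [e1, e2]
      _ = (Real.sqrt (P r) - Real.sqrt Q) * ((Real.sqrt (P r) + Real.sqrt Q) * N r) := by ring
    rw [Finset.sum_congr rfl (fun r _ => hfactor r)]
    have cs := Real.sum_mul_le_sqrt_mul_sqrt Finset.univ
      (fun r : Fin T → Bool => Real.sqrt (P r) - Real.sqrt Q)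
      (fun r : Fin T → Bool => (Real.sqrt (P r) + Real.sqrt Q) * N r)
    refine cs.trans (mul_le_mul ?_ ?_ (Real.sqrt_nonneg _) (Real.sqrt_nonneg _))
    · apply Real.sqrt_le_sqrt
      rw [hA2]
      exact hH2
    · apply Real.sqrt_le_sqrt
      have pt : ∀ r : Fin T → Bool, ((Real.sqrt (P r) + Real.sqrt Q) * N r)^2
          ≤ (2 * P r + 2 * Q) * (T:ℝ)^2 := by
        intro r
        have e1 : Real.sqrt (P r) ^ 2 = P r := Real.sq_sqrt (hP_pos r).le
        have e2 : Real.sqrt Q ^ 2 = Q := Real.sq_sqrt hQ0.le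
        have h1 : (Real.sqrt (P r) + Real.sqrt Q)^2 ≤ 2 * P r + 2 * Q := by
          nlinarith [sq_nonneg (Real.sqrt (P r) - Real.sqrt Q)]
        have h2 : (N r)^2 ≤ (T:ℝ)^2 := by
          have := hN0 r; have := hNT r; nlinarith
        calc ((Real.sqrt (P r) + Real.sqrt Q) * N r)^2
            = (Real.sqrt (P r) + Real.sqrt Q)^2 * (N r)^2 := by ring
        _ ≤ (2 * P r + 2 * Q) * (T:ℝ)^2 := by
            apply mul_le_mul h1 h2 (sq_nonneg _)
            nlinarith [hP_pos r, hQ0]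
      calc ∑ r : Fin T → Bool, ((Real.sqrt (P r) + Real.sqrt Q) * N r)^2
          ≤ ∑ r : Fin T → Bool, (2 * P r + 2 * Q) * (T:ℝ)^2 :=
            Finset.sum_le_sum (fun r _ => pt r)
      _ = 4 * (T:ℝ)^2 := by
          rw [← Finset.sum_mul, Finset.sum_add_distrib, ← Finset.mul_sum,
            ← Finset.mul_sum, hsumP, hsumQ]
          ring
  -- conclude
  have hsqrt1 : Real.sqrt (ε^2 * nQ A a) = ε * Real.sqrt (nQ A a) := by
    rw [Real.sqrt_mul (sq_nonneg ε), Real.sqrt_sq hε0.le]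
  have hsqrt2 : Real.sqrt (4 * (T:ℝ)^2) = 2 * T := by
    rw [show (4:ℝ) * (T:ℝ)^2 = (2*(T:ℝ))^2 by ring]
    exact Real.sqrt_sq (by positivity)
  have final : ∑ r : Fin T → Bool, P r * N r ≤ nQ A a + 2 * T * ε * Real.sqrt (nQ A a) := by
    have split : ∑ r : Fin T → Bool, P r * N r
        = (∑ r : Fin T → Bool, (P r - Q) * N r) + ∑ r : Fin T → Bool, Q * N r := by
      rw [← Finset.sum_add_distrib]
      apply Finset.sum_congr rfl
      intro r _
      ring
    have hQN : ∑ r : Fin T → Bool, Q * N r = nQ A a := by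
      rw [hnQ', Finset.mul_sum]
    rw [split, hQN]
    have := key
    rw [hsqrt1, hsqrt2] at this
    linarith
  exact final

lemma per_alg {K T : ℕ} (A : DetAlg K T) (ε : ℝ) (hε0 : 0 < ε) (hε : ε ≤ 1/2) :
    (ε/2) * ((K:ℝ)*T - T - 2*T*ε*Real.sqrt ((K:ℝ)*T))
      ≤ ∑ a : Fin K, ∑ r : Fin T → Bool,
          seqProb A (instMu K a ε) r * ((ε/2) * (regretCount A r a : ℝ)) := by
  classical
  have harm : ∀ a : Fin K, (ε/2) * ((T:ℝ) - (nQ A a + 2*T*ε*Real.sqrt (nQ A a)))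
      ≤ ∑ r : Fin T → Bool, seqProb A (instMu K a ε) r * ((ε/2) * (regretCount A r a : ℝ)) := by
    intro a
    have h1 := per_arm A a ε hε0 hε
    have h2 : ∑ r : Fin T → Bool, seqProb A (instMu K a ε) r * ((ε/2) * (regretCount A r a : ℝ))
        = (ε/2) * ((T:ℝ) - ∑ r : Fin T → Bool,
            seqProb A (instMu K a ε) r * ((T:ℝ) - regretCount A r a)) := by
      have e0 : ∀ r : Fin T → Bool,
          seqProb A (instMu K a ε) r * ((ε/2) * (regretCount A r a : ℝ))
          = (ε/2) * (seqProb A (instMu K a ε) r * (T:ℝ))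
            - (ε/2) * (seqProb A (instMu K a ε) r * ((T:ℝ) - regretCount A r a)) := by
        intro r; ring
      rw [Finset.sum_congr rfl (fun r _ => e0 r), Finset.sum_sub_distrib,
        ← Finset.mul_sum, ← Finset.mul_sum, ← Finset.sum_mul, sum_seqProb]
      ring
    rw [h2]
    have h3 : (T:ℝ) - (nQ A a + 2*T*ε*Real.sqrt (nQ A a))
        ≤ (T:ℝ) - ∑ r : Fin T → Bool,
            seqProb A (instMu K a ε) r * ((T:ℝ) - regretCount A r a) := by
      linarith
    exact mul_le_mul_of_nonneg_left h3 (by positivity)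
  refine le_trans ?_ (Finset.sum_le_sum (fun a _ => harm a))
  have e3 : ∑ a : Fin K, (ε/2) * ((T:ℝ) - (nQ A a + 2*T*ε*Real.sqrt (nQ A a)))
      = (ε/2) * ((K:ℝ)*T - (T:ℝ) - 2*T*ε * ∑ a : Fin K, Real.sqrt (nQ A a)) := by
    rw [← Finset.mul_sum]
    congr 1
    have e4 : ∀ a : Fin K, (T:ℝ) - (nQ A a + 2*T*ε*Real.sqrt (nQ A a))
        = (T:ℝ) - nQ A a - (2*T*ε) * Real.sqrt (nQ A a) := by intro a; ring
    rw [Finset.sum_congr rfl (fun a _ => e4 a), Finset.sum_sub_distrib, Finset.sum_sub_distrib,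
      ← Finset.mul_sum, sum_nQ, Finset.sum_const, Finset.card_univ, Fintype.card_fin,
      nsmul_eq_mul]
  rw [e3]
  have cs : ∑ a : Fin K, Real.sqrt (nQ A a) ≤ Real.sqrt ((K:ℝ)*T) := by
    have h := Real.sum_mul_le_sqrt_mul_sqrt (Finset.univ : Finset (Fin K))
      (fun _ => (1:ℝ)) (fun a => Real.sqrt (nQ A a))
    simp only [one_mul, one_pow] at h
    have e5 : ∑ a : Fin K, Real.sqrt (nQ A a) ^ 2 = (T:ℝ) := by
      rw [Finset.sum_congr rfl (fun a _ => Real.sq_sqrt (nQ_nonneg A a)), sum_nQ]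
    have e6 : ∑ _a : Fin K, (1:ℝ) = (K:ℝ) := by
      simp
    rw [e5, e6] at h
    calc ∑ a : Fin K, Real.sqrt (nQ A a) ≤ Real.sqrt (K:ℝ) * Real.sqrt (T:ℝ) := h
    _ = Real.sqrt ((K:ℝ)*T) := (Real.sqrt_mul (Nat.cast_nonneg K) _).symm
  have h6 : (2*(T:ℝ)*ε) * ∑ a : Fin K, Real.sqrt (nQ A a) ≤ (2*T*ε) * Real.sqrt ((K:ℝ)*T) :=
    mul_le_mul_of_nonneg_left cs (by positivity)
  apply mul_le_mul_of_nonneg_left _ (by positivity : (0:ℝ) ≤ ε/2)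
  linarith

/-- **Ω(√(KT)) regret lower bound for stochastic bandits.**
There are absolute constants `c, γ > 0` such that for all `K ≥ 2` and `T` with
`ε := √(cK/T) ≤ 1/2`, and every randomized bandit algorithm `π` (a distribution over
deterministic algorithms), if an arm `a` is drawn uniformly from `[K]` and the algorithm
is run on instance `I_a(ε)`, then `E[R(T)] ≥ γ√(KT)`, where
`R(T) = (ε/2) · #{t : a_t ≠ a}` is the regret under instance `I_a(ε)`. -/
theorem stochastic_bandits_regret_lower_bound :
    ∃ c > (0 : ℝ), ∃ γ > (0 : ℝ), ∀ (K T : ℕ), 2 ≤ K →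
      Real.sqrt (c * K / T) ≤ 1 / 2 →
      ∀ π : DetAlg K T → ℝ,
        (∀ alg, 0 ≤ π alg) → (∑ alg, π alg) = 1 →
        γ * Real.sqrt (K * T) ≤
          (K : ℝ)⁻¹ * ∑ a : Fin K, ∑ alg : DetAlg K T, π alg *
            ∑ r : Fin T → Bool,
              seqProb alg (instMu K a (Real.sqrt (c * K / T))) r *
                ((Real.sqrt (c * K / T) / 2) * (regretCount alg r a : ℝ)) := by
  classical
  refine ⟨1/64, by norm_num, 1/64, by norm_num, ?_⟩
  intro K T hK hhalf π hπ0 hπ1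
  rcases Nat.eq_zero_or_pos T with hT | hT
  · subst hT
    have hcount : ∀ (alg : DetAlg K 0) (r : Fin 0 → Bool) (a : Fin K),
        regretCount alg r a = 0 := by
      intro alg r a
      unfold regretCount
      simp
    simp [hcount]
  -- main case
  set ε : ℝ := Real.sqrt (1/64 * K / T) with hεdef
  have hKpos : (0:ℝ) < K := by
    have : (2:ℝ) ≤ K := by exact_mod_cast hK
    linarith
  have hTpos : (0:ℝ) < T := by exact_mod_cast hT
  have hxpos : (0:ℝ) < 1/64 * K / T := by positivity
  have hε0 : 0 < ε := Real.sqrt_pos.mpr hxpos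
  have hε : ε ≤ 1/2 := hhalf
  have hε2 : ε^2 = 1/64 * K / T := Real.sq_sqrt hxpos.le
  -- numeric identities
  have hid1 : ε * Real.sqrt ((K:ℝ)*T) = (K:ℝ)/8 := by
    rw [hεdef, ← Real.sqrt_mul hxpos.le]
    have e : 1/64 * (K:ℝ) / T * ((K:ℝ)*T) = ((K:ℝ)/8)^2 := by
      field_simp
      ring
    rw [e, Real.sqrt_sq (by positivity)]
  have hid2 : ε * (T:ℝ) = Real.sqrt ((K:ℝ)*T) / 8 := by
    have h1 : 0 ≤ ε * (T:ℝ) := by positivity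
    have h2 : (0:ℝ) ≤ Real.sqrt ((K:ℝ)*T) / 8 := by positivity
    have hsq : (ε * (T:ℝ))^2 = (Real.sqrt ((K:ℝ)*T) / 8)^2 := by
      rw [mul_pow, hε2, div_pow, Real.sq_sqrt (by positivity)]
      field_simp
      ring
    rw [← Real.sqrt_sq h1, ← Real.sqrt_sq h2, hsq]
  -- swap the sums over a and alg
  have hswap : ∑ a : Fin K, ∑ alg : DetAlg K T, π alg *
        ∑ r : Fin T → Bool, seqProb alg (instMu K a ε) r * ((ε/2) * (regretCount alg r a : ℝ))
      = ∑ alg : DetAlg K T, π alg * ∑ a : Fin K,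
        ∑ r : Fin T → Bool, seqProb alg (instMu K a ε) r * ((ε/2) * (regretCount alg r a : ℝ)) := by
    rw [Finset.sum_comm]
    exact Finset.sum_congr rfl (fun alg _ => (Finset.mul_sum _ _ _).symm)
  set B : ℝ := (ε/2) * ((K:ℝ)*T - T - 2*T*ε*Real.sqrt ((K:ℝ)*T)) with hBdef
  have hBle : ∀ alg : DetAlg K T, B ≤ ∑ a : Fin K,
      ∑ r : Fin T → Bool, seqProb alg (instMu K a ε) r * ((ε/2) * (regretCount alg r a : ℝ)) :=
    fun alg => per_alg alg ε hε0 hε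
  have hXB : B ≤ ∑ alg : DetAlg K T, π alg * ∑ a : Fin K,
      ∑ r : Fin T → Bool, seqProb alg (instMu K a ε) r * ((ε/2) * (regretCount alg r a : ℝ)) := by
    calc B = ∑ alg : DetAlg K T, π alg * B := by rw [← Finset.sum_mul, hπ1, one_mul]
    _ ≤ _ := Finset.sum_le_sum (fun alg _ => mul_le_mul_of_nonneg_left (hBle alg) (hπ0 alg))
  -- numeric lower bound on B
  have h2T : (T:ℝ) ≤ (K:ℝ)*T/2 := by
    have h2K : (2:ℝ) ≤ K := by exact_mod_cast hK
    nlinarith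
  have h2 : 2*(T:ℝ)*ε*Real.sqrt ((K:ℝ)*T) = (K:ℝ)*T/4 := by
    rw [mul_assoc, hid1]
    ring
  have hbr : (K:ℝ)*T/4 ≤ (K:ℝ)*T - T - 2*T*ε*Real.sqrt ((K:ℝ)*T) := by
    rw [h2]
    linarith
  have hB2 : (ε/2)*((K:ℝ)*T/4) = (K:ℝ)*Real.sqrt ((K:ℝ)*T)/64 := by
    linear_combination ((K:ℝ)/8) * hid2
  have hBlb : (K:ℝ)*Real.sqrt ((K:ℝ)*T)/64 ≤ B := by
    rw [hBdef, ← hB2]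
    exact mul_le_mul_of_nonneg_left hbr (by positivity)
  -- conclude
  rw [hswap]
  have hfin : (1:ℝ)/64 * Real.sqrt ((K:ℝ)*T) ≤ (K:ℝ)⁻¹ * B := by
    have : (K:ℝ)⁻¹ * ((K:ℝ)*Real.sqrt ((K:ℝ)*T)/64) = (1:ℝ)/64 * Real.sqrt ((K:ℝ)*T) := by
      field_simp
    rw [← this]
    exact mul_le_mul_of_nonneg_left hBlb (by positivity)
  calc (1:ℝ)/64 * Real.sqrt ((K:ℝ)*T) ≤ (K:ℝ)⁻¹ * B := hfin
  _ ≤ _ := mul_le_mul_of_nonneg_left hXB (by positivity)
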